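/- If a closed curve K in ℝ³ admits a height function (a linear functional) with exactly n local minima and n local maxima on the domain circle, then the (n+1)-st hull of K is empty. -/

import Mathlib

open Set
open scoped Classical

noncomputable section

variable {E : Type*} [NormedAddCommGroup E] [NormedSpace ℝ E]

/-- The connected components of the periodic level set `Z ⊆ ℝ`, with one
canonical representative chosen per period. -/
def circComps (Z : Set ℝ) : Set (Set ℝ) :=
  {S | ∃ t ∈ Z, S = connectedComponentIn Z t ∧ sInf S ∈ Ico (0 : ℝ) 1}

/-- The arc of the curve just after the component `S` lies above the level `c`. -/
def AboveAfter (g : ℝ → ℝ) (c : ℝ) (S : Set ℝ) : Prop :=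
  ∃ ε > 0, ∀ s ∈ Ioo (sSup S) (sSup S + ε), c < g s

/-- The arc of the curve just before the component `S` lies above the level `c`. -/
def AboveBefore (g : ℝ → ℝ) (c : ℝ) (S : Set ℝ) : Prop :=
  ∃ ε > 0, ∀ s ∈ Ioo (sInf S - ε) (sInf S), c < g s

/-- A glancing intersection: the arcs just before and just after the component `S`
lie on the same side of the level `c`; such components are counted twice. -/
def IsGlancing (g : ℝ → ℝ) (c : ℝ) (S : Set ℝ) : Prop :=
  AboveBefore g c S ↔ AboveAfter g c S

/-- Number of intersections of the closed curve `K` (a `1`-periodic map `ℝ → E`)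
with the hyperplane `{x | f x = c}`: components of the preimage are counted once,
glancing components twice, and a curve contained in the hyperplane counts as two
intersections. (Infinitely many components give an infinite count.) -/
def cutCount (K : ℝ → E) (f : E →L[ℝ] ℝ) (c : ℝ) : Cardinal :=
  if {t : ℝ | f (K t) = c} = univ then 2
  else Cardinal.mk (circComps {t : ℝ | f (K t) = c})
    + Cardinal.mk ({S ∈ circComps {t : ℝ | f (K t) = c} | IsGlancing (fun t => f (K t)) c S})

/-- `K` cuts the hyperplane `{x | f x = c}` at least `m` times. -/
def CutsAtLeast (K : ℝ → E) (f : E →L[ℝ] ℝ) (c : ℝ) (m : ℕ) : Prop :=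
  (m : Cardinal) ≤ cutCount K f c

/-- The `n`-th hull of the closed curve `K`: points `p` such that every hyperplane
through `p` is cut at least `2n` times by `K`. -/
def hull (K : ℝ → E) (n : ℕ) : Set E :=
  {p | ∀ f : E →L[ℝ] ℝ, f ≠ 0 → CutsAtLeast K f (f p) (2 * n)}

namespace BP

open Topology Filter


lemma accum_infinite {A : Set ℝ} {b : ℝ} (h : ∀ ε > 0, ∃ x ∈ A, b < x ∧ x < b + ε) :
    A.Infinite := by
  by_contra hns
  rw [Set.not_infinite] at hns
  have hfin2 : (A ∩ Ioo b (b + 1)).Finite := hns.subset inter_subset_left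
  obtain ⟨x0, hx0A, hx0b, hx0b'⟩ := h 1 one_pos
  have hne : (A ∩ Ioo b (b + 1)).Nonempty := ⟨x0, hx0A, hx0b, hx0b'⟩
  obtain ⟨m, hm, hmin⟩ := Set.exists_min_image _ id hfin2 hne
  have hmb : b < m := hm.2.1
  obtain ⟨x, hxA, hxb, hxm⟩ := h (m - b) (by linarith)
  have hx' : x ∈ A ∩ Ioo b (b + 1) := ⟨hxA, hxb, by have := hm.2.2; linarith⟩
  have := hmin x hx'
  simp only [id] at this
  linarith

lemma accum_infinite' {A : Set ℝ} {b : ℝ} (h : ∀ ε > 0, ∃ x ∈ A, b - ε < x ∧ x < b) :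
    A.Infinite := by
  by_contra hns
  rw [Set.not_infinite] at hns
  have hfin2 : (A ∩ Ioo (b - 1) b).Finite := hns.subset inter_subset_left
  obtain ⟨x0, hx0A, hx0b, hx0b'⟩ := h 1 one_pos
  have hne : (A ∩ Ioo (b - 1) b).Nonempty := ⟨x0, hx0A, hx0b, hx0b'⟩
  obtain ⟨m, hm, hmax⟩ := Set.exists_max_image _ id hfin2 hne
  have hmb : m < b := hm.2.2
  obtain ⟨x, hxA, hxb, hxm⟩ := h (b - m) (by linarith)
  have hx' : x ∈ A ∩ Ioo (b - 1) b := ⟨hxA, by have := hm.2.1; linarith, hxm⟩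
  have := hmax x hx'
  simp only [id] at this
  linarith

lemma eq_of_fract_eq {x y : ℝ} (h1 : |x - y| < 1) (h : Int.fract x = Int.fract y) : x = y := by
  have hk : x - y = ((⌊x⌋ - ⌊y⌋ : ℤ) : ℝ) := by
    rw [Int.fract, Int.fract] at h
    push_cast
    linarith
  rw [hk] at h1
  rw [← Int.cast_abs] at h1
  have h2 : |⌊x⌋ - ⌊y⌋| < (1 : ℤ) := by exact_mod_cast h1
  have h3 : ⌊x⌋ - ⌊y⌋ = 0 := by rw [abs_lt] at h2; omega
  have : x - y = 0 := by rw [hk, h3]; simp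
  linarith


variable {g : ℝ → ℝ} {c : ℝ}

lemma per_int (hper : Function.Periodic g 1) (t : ℝ) (k : ℤ) : g (t + k) = g t := by
  simpa using (hper.int_mul k) t

lemma lev_closed (hg : Continuous g) : IsClosed {t | g t = c} :=
  isClosed_eq hg continuous_const

lemma lev_add_int (hper : Function.Periodic g 1) {t : ℝ} (k : ℤ) (h : t ∈ {t | g t = c}) :
    t + k ∈ {t | g t = c} := by
  simpa [Set.mem_setOf_eq, per_int hper t k] using h

lemma isLocalMax_add_int (hper : Function.Periodic g 1) {x : ℝ} (k : ℤ)
    (h : IsLocalMax g x) : IsLocalMax g (x + k) := by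
  have hmap : 𝓝 (x + (k : ℝ)) = Filter.map (· + (k : ℝ)) (𝓝 x) :=
    ((Homeomorph.addRight (k : ℝ)).map_nhds_eq x).symm
  unfold IsLocalMax IsMaxFilter
  rw [hmap, Filter.eventually_map]
  exact h.mono fun y hy => by simpa [per_int hper y k, per_int hper x k] using hy

lemma isLocalMin_add_int (hper : Function.Periodic g 1) {x : ℝ} (k : ℤ)
    (h : IsLocalMin g x) : IsLocalMin g (x + k) := by
  have hmap : 𝓝 (x + (k : ℝ)) = Filter.map (· + (k : ℝ)) (𝓝 x) :=
    ((Homeomorph.addRight (k : ℝ)).map_nhds_eq x).symm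
  unfold IsLocalMin IsMinFilter
  rw [hmap, Filter.eventually_map]
  exact h.mono fun y hy => by simpa [per_int hper y k, per_int hper x k] using hy

lemma isLocalMax_fract (hper : Function.Periodic g 1) {x : ℝ} (h : IsLocalMax g x) :
    IsLocalMax g (Int.fract x) := by
  have := isLocalMax_add_int hper (-⌊x⌋) h
  simpa [Int.fract, sub_eq_add_neg] using this

lemma isLocalMin_fract (hper : Function.Periodic g 1) {x : ℝ} (h : IsLocalMin g x) :
    IsLocalMin g (Int.fract x) := by
  have := isLocalMin_add_int hper (-⌊x⌋) h
  simpa [Int.fract, sub_eq_add_neg] using this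

lemma g_fract (hper : Function.Periodic g 1) (x : ℝ) : g (Int.fract x) = g x := by
  have h := per_int hper (Int.fract x) ⌊x⌋
  rw [Int.fract, sub_add_cancel] at h
  rw [Int.fract]
  exact h.symm

/-- interior extremum between two level points -/
lemma exists_max_between (hg : Continuous g) {u v w : ℝ} (huv : u < v)
    (hu : g u = c) (hv : g v = c) (hw : w ∈ Ioo u v) (hgw : c < g w) :
    ∃ x ∈ Ioo u v, IsLocalMax g x ∧ c < g x := by
  obtain ⟨x, hxm, hmax⟩ := (isCompact_Icc (a := u) (b := v)).exists_isMaxOn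
    (nonempty_Icc.2 huv.le) hg.continuousOn
  have hgx : c < g x := lt_of_lt_of_le hgw (hmax (Ioo_subset_Icc_self hw))
  have hxu : x ≠ u := fun h => by rw [h, hu] at hgx; exact lt_irrefl _ hgx
  have hxv : x ≠ v := fun h => by rw [h, hv] at hgx; exact lt_irrefl _ hgx
  have hxIoo : x ∈ Ioo u v := ⟨lt_of_le_of_ne hxm.1 (Ne.symm hxu), lt_of_le_of_ne hxm.2 hxv⟩
  exact ⟨x, hxIoo, hmax.isLocalMax (Icc_mem_nhds hxIoo.1 hxIoo.2), hgx⟩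

lemma exists_min_between (hg : Continuous g) {u v w : ℝ} (huv : u < v)
    (hu : g u = c) (hv : g v = c) (hw : w ∈ Ioo u v) (hgw : g w < c) :
    ∃ x ∈ Ioo u v, IsLocalMin g x ∧ g x < c := by
  obtain ⟨x, hxm, hmin⟩ := (isCompact_Icc (a := u) (b := v)).exists_isMinOn
    (nonempty_Icc.2 huv.le) hg.continuousOn
  have hgx : g x < c := lt_of_le_of_lt (hmin (Ioo_subset_Icc_self hw)) hgw
  have hxu : x ≠ u := fun h => by rw [h, hu] at hgx; exact lt_irrefl _ hgx
  have hxv : x ≠ v := fun h => by rw [h, hv] at hgx; exact lt_irrefl _ hgx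
  have hxIoo : x ∈ Ioo u v := ⟨lt_of_le_of_ne hxm.1 (Ne.symm hxu), lt_of_le_of_ne hxm.2 hxv⟩
  exact ⟨x, hxIoo, hmin.isLocalMin (Icc_mem_nhds hxIoo.1 hxIoo.2), hgx⟩

lemma sign_dichotomy (hg : Continuous g) {u v : ℝ}
    (hz : ∀ s ∈ Ioo u v, g s ≠ c) :
    (∀ s ∈ Ioo u v, c < g s) ∨ (∀ s ∈ Ioo u v, g s < c) := by
  by_contra h
  push_neg at h
  obtain ⟨⟨s₁, hs₁, hle₁⟩, ⟨s₂, hs₂, hle₂⟩⟩ := h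
  have h₁ : g s₁ < c := lt_of_le_of_ne hle₁ (hz s₁ hs₁)
  have h₂ : c < g s₂ := lt_of_le_of_ne hle₂ (Ne.symm (hz s₂ hs₂))
  rcases le_total s₁ s₂ with hle | hle
  · have := intermediate_value_Icc hle hg.continuousOn ⟨h₁.le, h₂.le⟩
    obtain ⟨x, hx, hgx⟩ := this
    exact hz x ⟨lt_of_lt_of_le hs₁.1 hx.1, lt_of_le_of_lt hx.2 hs₂.2⟩ hgx
  · have := intermediate_value_Icc' hle hg.continuousOn ⟨h₁.le, h₂.le⟩
    obtain ⟨x, hx, hgx⟩ := this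
    exact hz x ⟨lt_of_lt_of_le hs₂.1 hx.1, lt_of_le_of_lt hx.2 hs₁.2⟩ hgx

variable {S : Set ℝ}

lemma comp_sub (hS : S ∈ circComps {t : ℝ | g t = c}) : S ⊆ {t : ℝ | g t = c} := by
  obtain ⟨t, ht, heq, -⟩ := id hS; rw [heq]; exact connectedComponentIn_subset _ _

lemma comp_ne (hS : S ∈ circComps {t : ℝ | g t = c}) : S.Nonempty := by
  obtain ⟨t, ht, heq, -⟩ := id hS; rw [heq]; exact ⟨t, mem_connectedComponentIn ht⟩

lemma comp_preconn (hS : S ∈ circComps {t : ℝ | g t = c}) : IsPreconnected S := by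
  obtain ⟨t, ht, heq, -⟩ := id hS; rw [heq]; exact isPreconnected_connectedComponentIn

lemma comp_closed (hg : Continuous g) (hS : S ∈ circComps {t : ℝ | g t = c}) :
    IsClosed S := by
  obtain ⟨t, ht, heq, -⟩ := id hS
  apply isClosed_of_closure_subset
  rw [heq]
  exact IsPreconnected.subset_connectedComponentIn
    isPreconnected_connectedComponentIn.closure
    (subset_closure (mem_connectedComponentIn ht))
    (closure_minimal (connectedComponentIn_subset _ _) (lev_closed hg))

lemma comp_bddAbove (hper : Function.Periodic g 1) (hnu : {t : ℝ | g t = c} ≠ univ)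
    (hS : S ∈ circComps {t : ℝ | g t = c}) : BddAbove S := by
  by_contra hb
  apply hnu
  rw [eq_univ_iff_forall]
  intro s
  obtain ⟨t, ht, heq, -⟩ := id hS
  have hOrd : S.OrdConnected := (comp_preconn hS).ordConnected
  set k : ℤ := ⌈t - s⌉ with hk
  have hk1 : t ≤ s + k := by have := Int.le_ceil (t - s); linarith
  rw [not_bddAbove_iff] at hb
  obtain ⟨y, hy, hlt⟩ := hb (s + k)
  have htS : t ∈ S := heq ▸ mem_connectedComponentIn ht
  have hmem : s + (k : ℝ) ∈ S := hOrd.out htS hy ⟨hk1, hlt.le⟩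
  have hz : s + (k : ℝ) ∈ {t : ℝ | g t = c} := comp_sub hS hmem
  simpa [Set.mem_setOf_eq, per_int hper s k] using hz

lemma comp_bddBelow (hper : Function.Periodic g 1) (hnu : {t : ℝ | g t = c} ≠ univ)
    (hS : S ∈ circComps {t : ℝ | g t = c}) : BddBelow S := by
  by_contra hb
  apply hnu
  rw [eq_univ_iff_forall]
  intro s
  obtain ⟨t, ht, heq, -⟩ := id hS
  have hOrd : S.OrdConnected := (comp_preconn hS).ordConnected
  set k : ℤ := ⌊t - s⌋ with hk
  have hk1 : s + k ≤ t := by have := Int.floor_le (t - s); linarith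
  rw [not_bddBelow_iff] at hb
  obtain ⟨y, hy, hlt⟩ := hb (s + k)
  have htS : t ∈ S := heq ▸ mem_connectedComponentIn ht
  have hmem : s + (k : ℝ) ∈ S := hOrd.out hy htS ⟨hlt.le, hk1⟩
  have hz : s + (k : ℝ) ∈ {t : ℝ | g t = c} := comp_sub hS hmem
  simpa [Set.mem_setOf_eq, per_int hper s k] using hz

lemma comp_sSup_mem (hg : Continuous g) (hper : Function.Periodic g 1)
    (hnu : {t : ℝ | g t = c} ≠ univ) (hS : S ∈ circComps {t : ℝ | g t = c}) : sSup S ∈ S :=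
  (comp_closed hg hS).csSup_mem (comp_ne hS) (comp_bddAbove hper hnu hS)

lemma comp_sInf_mem (hg : Continuous g) (hper : Function.Periodic g 1)
    (hnu : {t : ℝ | g t = c} ≠ univ) (hS : S ∈ circComps {t : ℝ | g t = c}) : sInf S ∈ S :=
  (comp_closed hg hS).csInf_mem (comp_ne hS) (comp_bddBelow hper hnu hS)

lemma comp_eq_Icc (hg : Continuous g) (hper : Function.Periodic g 1)
    (hnu : {t : ℝ | g t = c} ≠ univ) (hS : S ∈ circComps {t : ℝ | g t = c}) :
    S = Icc (sInf S) (sSup S) := by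
  apply subset_antisymm
  · exact fun x hx => ⟨csInf_le (comp_bddBelow hper hnu hS) hx,
      le_csSup (comp_bddAbove hper hnu hS) hx⟩
  · exact (comp_preconn hS).ordConnected.out (comp_sInf_mem hg hper hnu hS)
      (comp_sSup_mem hg hper hnu hS)

lemma comp_sSup_lt (hg : Continuous g) (hper : Function.Periodic g 1)
    (hnu : {t : ℝ | g t = c} ≠ univ) (hS : S ∈ circComps {t : ℝ | g t = c}) :
    sSup S < sInf S + 1 := by
  by_contra hle
  push_neg at hle
  have hinfle : sInf S ≤ sSup S :=
    csInf_le_csSup (comp_ne hS) (comp_bddBelow hper hnu hS) (comp_bddAbove hper hnu hS)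
  have ha1 : sInf S + 1 ∈ S := by
    have h1 : sInf S + 1 ∈ Icc (sInf S) (sSup S) := ⟨by linarith, hle⟩
    rwa [← comp_eq_Icc hg hper hnu hS] at h1
  obtain ⟨t, ht, heq, -⟩ := id hS
  have htS : t ∈ S := heq ▸ mem_connectedComponentIn ht
  set S' : Set ℝ := (fun y => y + (1 : ℝ)) '' S with hS'def
  have hpre' : IsPreconnected S' :=
    (comp_preconn hS).image _ (continuous_add_right (1 : ℝ)).continuousOn
  have hsub' : S' ⊆ {t : ℝ | g t = c} := by
    rintro _ ⟨y, hy, rfl⟩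
    have := lev_add_int hper 1 (comp_sub hS hy)
    simpa using this
  have hmem1 : sInf S + 1 ∈ S' := ⟨sInf S, comp_sInf_mem hg hper hnu hS, rfl⟩
  have hU : IsPreconnected (S ∪ S') :=
    IsPreconnected.union (sInf S + 1) ha1 hmem1 (comp_preconn hS) hpre'
  have hsub : S ∪ S' ⊆ connectedComponentIn {t : ℝ | g t = c} t :=
    hU.subset_connectedComponentIn (Or.inl htS) (union_subset (comp_sub hS) hsub')
  have hmem2 : sSup S + 1 ∈ S := by
    have h2 := hsub (Or.inr ⟨sSup S, comp_sSup_mem hg hper hnu hS, rfl⟩)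
    rwa [← heq] at h2
  have := le_csSup (comp_bddAbove hper hnu hS) hmem2
  linarith

lemma comp_eq_compIn (hS : S ∈ circComps {t : ℝ | g t = c}) {x : ℝ} (hx : x ∈ S) :
    S = connectedComponentIn {t : ℝ | g t = c} x := by
  obtain ⟨t, ht, heq, -⟩ := id hS
  subst heq
  exact connectedComponentIn_eq hx

lemma compIn_add_int (hper : Function.Periodic g 1) (k : ℤ) (t : ℝ) :
    connectedComponentIn {t : ℝ | g t = c} (t + k) =
      (fun y => y + (k : ℝ)) '' connectedComponentIn {t : ℝ | g t = c} t := by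
  have himg : ∀ (s : ℝ), s ∈ {t : ℝ | g t = c} → ∀ (j : ℤ),
      (fun y => y + (j : ℝ)) '' connectedComponentIn {t : ℝ | g t = c} s ⊆
        connectedComponentIn {t : ℝ | g t = c} (s + j) := by
    intro s hs j
    apply IsPreconnected.subset_connectedComponentIn
    · exact isPreconnected_connectedComponentIn.image _ (continuous_add_right (j : ℝ)).continuousOn
    · exact ⟨s, mem_connectedComponentIn hs, rfl⟩
    · rintro _ ⟨y, hy, rfl⟩
      exact lev_add_int hper j (connectedComponentIn_subset _ _ hy)
  by_cases ht : t ∈ {t : ℝ | g t = c}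
  · apply subset_antisymm
    · intro x hx
      have htk : (t + (k : ℝ)) ∈ {t : ℝ | g t = c} := lev_add_int hper k ht
      have h2 := himg (t + k) htk (-k)
      have hx' : x + ((-k : ℤ) : ℝ) ∈ connectedComponentIn {t : ℝ | g t = c} (t + k + ((-k : ℤ) : ℝ)) :=
        h2 ⟨x, hx, rfl⟩
      refine ⟨x + ((-k : ℤ) : ℝ), ?_, by push_cast; ring⟩
      have : t + (k : ℝ) + ((-k : ℤ) : ℝ) = t := by push_cast; ring
      rwa [this] at hx'
    · exact himg t ht k
  · have htk : (t + (k : ℝ)) ∉ {t : ℝ | g t = c} := by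
      intro h
      exact ht (by simpa [Set.mem_setOf_eq, per_int hper t k] using h)
    rw [connectedComponentIn_eq_empty ht, connectedComponentIn_eq_empty htk, image_empty]



lemma next_gap (hg : Continuous g) (hper : Function.Periodic g 1)
    (hnu : {t : ℝ | g t = c} ≠ univ)
    (hfinM : {t ∈ Ico (0:ℝ) 1 | IsLocalMax g t}.Finite)
    (hfinm : {t ∈ Ico (0:ℝ) 1 | IsLocalMin g t}.Finite)
    (hS : S ∈ circComps {t : ℝ | g t = c}) :
    ∃ t', sSup S < t' ∧ t' ≤ sSup S + 1 ∧ g t' = c ∧ ∀ s ∈ Ioo (sSup S) t', g s ≠ c := by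
  set b := sSup S with hbdef
  have hbS : b ∈ S := comp_sSup_mem hg hper hnu hS
  have hb : g b = c := comp_sub hS hbS
  set N : Set ℝ := {t : ℝ | g t = c} ∩ Ioi b with hNdef
  have hNne : b + 1 ∈ N := by
    constructor
    · have := lev_add_int hper 1 (show b ∈ {t : ℝ | g t = c} from hb)
      simpa using this
    · simp [Set.mem_Ioi]
  have hNbdd : BddBelow N := ⟨b, fun z hz => le_of_lt hz.2⟩
  set t' := sInf N with ht'def
  have h1 : b ≤ t' := le_csInf ⟨_, hNne⟩ fun z hz => le_of_lt hz.2
  have h2 : t' ≤ b + 1 := csInf_le hNbdd hNne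
  have h3 : g t' = c := by
    have hcl : t' ∈ closure N := csInf_mem_closure ⟨_, hNne⟩ hNbdd
    have : closure N ⊆ {t : ℝ | g t = c} := by
      calc closure N ⊆ closure {t : ℝ | g t = c} := closure_mono inter_subset_left
        _ = {t : ℝ | g t = c} := (lev_closed hg).closure_eq
    exact this hcl
  have h4 : ∀ s ∈ Ioo b t', g s ≠ c := by
    intro s hs hcs
    exact absurd (csInf_le hNbdd ⟨hcs, hs.1⟩) (not_le.mpr hs.2)
  have h5 : b < t' := by
    by_contra hbt
    push_neg at hbt
    have ht'b : t' = b := le_antisymm hbt h1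
    set A : Set ℝ := {x ∈ Ioo b (b + 1) | IsLocalMax g x ∨ IsLocalMin g x} with hAdef
    have hacc : ∀ ε > 0, ∃ x ∈ A, b < x ∧ x < b + ε := by
      intro ε hε
      set ε' := min ε 1 with hε'def
      have hε' : 0 < ε' := lt_min hε one_pos
      have hlt : sInf N < b + ε' := by rw [← ht'def, ht'b]; linarith
      obtain ⟨z, hzN, hz⟩ := (csInf_lt_iff hNbdd ⟨_, hNne⟩).mp hlt
      have hz1 : b < z := hzN.2
      have hz2 : g z = c := hzN.1
      have hw : ∃ w ∈ Ioo b z, g w ≠ c := by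
        by_contra hno
        push_neg at hno
        have hIcc : Icc b z ⊆ {t : ℝ | g t = c} := by
          intro u hu
          rcases eq_or_lt_of_le hu.1 with h | h
          · exact h ▸ hb
          · rcases eq_or_lt_of_le hu.2 with h' | h'
            · exact h' ▸ hz2
            · exact hno u ⟨h, h'⟩
        have hcomp : Icc b z ⊆ connectedComponentIn {t : ℝ | g t = c} b :=
          isPreconnected_Icc.subset_connectedComponentIn (left_mem_Icc.mpr hz1.le) hIcc
        have hSb : S = connectedComponentIn {t : ℝ | g t = c} b := comp_eq_compIn hS hbS
        have hzS : z ∈ S := by rw [hSb]; exact hcomp (right_mem_Icc.mpr hz1.le)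
        have := le_csSup (comp_bddAbove hper hnu hS) hzS
        rw [← hbdef] at this
        linarith
      obtain ⟨w, hwI, hwne⟩ := hw
      rcases hwne.lt_or_gt with hlt' | hlt'
      · obtain ⟨x, hxI, hxmin, -⟩ := exists_min_between hg hz1 hb hz2 hwI hlt'
        refine ⟨x, ⟨⟨hxI.1, ?_⟩, Or.inr hxmin⟩, hxI.1, ?_⟩
        · have : z < b + ε' := hz
          have : ε' ≤ 1 := min_le_right _ _
          linarith [hxI.2]
        · have : ε' ≤ ε := min_le_left _ _
          linarith [hxI.2]
      · obtain ⟨x, hxI, hxmax, -⟩ := exists_max_between hg hz1 hb hz2 hwI hlt'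
        refine ⟨x, ⟨⟨hxI.1, ?_⟩, Or.inl hxmax⟩, hxI.1, ?_⟩
        · have : z < b + ε' := hz
          have : ε' ≤ 1 := min_le_right _ _
          linarith [hxI.2]
        · have : ε' ≤ ε := min_le_left _ _
          linarith [hxI.2]
    have hAinf : A.Infinite := accum_infinite hacc
    have hinj : Set.InjOn Int.fract A := by
      intro x hx y hy hxy
      apply eq_of_fract_eq _ hxy
      have hx' := hx.1
      have hy' := hy.1
      rw [abs_lt]
      constructor <;> [skip; skip] <;>
        · simp only [Set.mem_Ioo] at hx' hy'; linarith [hx'.1, hx'.2, hy'.1, hy'.2]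
    have hsub : Int.fract '' A ⊆
        {t ∈ Ico (0:ℝ) 1 | IsLocalMax g t} ∪ {t ∈ Ico (0:ℝ) 1 | IsLocalMin g t} := by
      rintro _ ⟨x, ⟨hxI, hxE⟩, rfl⟩
      have hIco : Int.fract x ∈ Ico (0:ℝ) 1 := ⟨Int.fract_nonneg x, Int.fract_lt_one x⟩
      rcases hxE with h | h
      · exact Or.inl ⟨hIco, isLocalMax_fract hper h⟩
      · exact Or.inr ⟨hIco, isLocalMin_fract hper h⟩
    exact (hAinf.image hinj) ((hfinM.union hfinm).subset hsub)
  exact ⟨t', h5, h2, h3, h4⟩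

lemma prev_gap (hg : Continuous g) (hper : Function.Periodic g 1)
    (hnu : {t : ℝ | g t = c} ≠ univ)
    (hfinM : {t ∈ Ico (0:ℝ) 1 | IsLocalMax g t}.Finite)
    (hfinm : {t ∈ Ico (0:ℝ) 1 | IsLocalMin g t}.Finite)
    (hS : S ∈ circComps {t : ℝ | g t = c}) :
    ∃ t'', sInf S - 1 ≤ t'' ∧ t'' < sInf S ∧ g t'' = c ∧ ∀ s ∈ Ioo t'' (sInf S), g s ≠ c := by
  set a := sInf S with hadef
  have haS : a ∈ S := comp_sInf_mem hg hper hnu hS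
  have ha : g a = c := comp_sub hS haS
  set N : Set ℝ := {t : ℝ | g t = c} ∩ Iio a with hNdef
  have hNne : a - 1 ∈ N := by
    constructor
    · have := lev_add_int hper (-1) (show a ∈ {t : ℝ | g t = c} from ha)
      simpa [sub_eq_add_neg] using this
    · simp [Set.mem_Iio]
  have hNbdd : BddAbove N := ⟨a, fun z hz => le_of_lt hz.2⟩
  set t'' := sSup N with ht''def
  have h1 : t'' ≤ a := csSup_le ⟨_, hNne⟩ fun z hz => le_of_lt hz.2
  have h2 : a - 1 ≤ t'' := le_csSup hNbdd hNne
  have h3 : g t'' = c := by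
    have hcl : t'' ∈ closure N := csSup_mem_closure ⟨_, hNne⟩ hNbdd
    have : closure N ⊆ {t : ℝ | g t = c} := by
      calc closure N ⊆ closure {t : ℝ | g t = c} := closure_mono inter_subset_left
        _ = {t : ℝ | g t = c} := (lev_closed hg).closure_eq
    exact this hcl
  have h4 : ∀ s ∈ Ioo t'' a, g s ≠ c := by
    intro s hs hcs
    exact absurd (le_csSup hNbdd ⟨hcs, hs.2⟩) (not_le.mpr hs.1)
  have h5 : t'' < a := by
    by_contra hbt
    push_neg at hbt
    have ht''a : t'' = a := le_antisymm h1 hbt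
    set A : Set ℝ := {x ∈ Ioo (a - 1) a | IsLocalMax g x ∨ IsLocalMin g x} with hAdef
    have hacc : ∀ ε > 0, ∃ x ∈ A, a - ε < x ∧ x < a := by
      intro ε hε
      set ε' := min ε 1 with hε'def
      have hε' : 0 < ε' := lt_min hε one_pos
      have hlt : a - ε' < sSup N := by rw [← ht''def, ht''a]; linarith
      obtain ⟨z, hzN, hz⟩ := (lt_csSup_iff hNbdd ⟨_, hNne⟩).mp hlt
      have hz1 : z < a := hzN.2
      have hz2 : g z = c := hzN.1
      have hw : ∃ w ∈ Ioo z a, g w ≠ c := by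
        by_contra hno
        push_neg at hno
        have hIcc : Icc z a ⊆ {t : ℝ | g t = c} := by
          intro u hu
          rcases eq_or_lt_of_le hu.1 with h | h
          · exact h ▸ hz2
          · rcases eq_or_lt_of_le hu.2 with h' | h'
            · exact h' ▸ ha
            · exact hno u ⟨h, h'⟩
        have hcomp : Icc z a ⊆ connectedComponentIn {t : ℝ | g t = c} a :=
          isPreconnected_Icc.subset_connectedComponentIn (right_mem_Icc.mpr hz1.le) hIcc
        have hSa : S = connectedComponentIn {t : ℝ | g t = c} a := comp_eq_compIn hS haS
        have hzS : z ∈ S := by rw [hSa]; exact hcomp (left_mem_Icc.mpr hz1.le)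
        have := csInf_le (comp_bddBelow hper hnu hS) hzS
        rw [← hadef] at this
        linarith
      obtain ⟨w, hwI, hwne⟩ := hw
      rcases hwne.lt_or_gt with hlt' | hlt'
      · obtain ⟨x, hxI, hxmin, -⟩ := exists_min_between hg hz1 hz2 ha hwI hlt'
        refine ⟨x, ⟨⟨?_, hxI.2⟩, Or.inr hxmin⟩, ?_, hxI.2⟩
        · have : a - ε' < z := hz
          have : ε' ≤ 1 := min_le_right _ _
          linarith [hxI.1]
        · have : ε' ≤ ε := min_le_left _ _
          linarith [hxI.1]
      · obtain ⟨x, hxI, hxmax, -⟩ := exists_max_between hg hz1 hz2 ha hwI hlt'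
        refine ⟨x, ⟨⟨?_, hxI.2⟩, Or.inl hxmax⟩, ?_, hxI.2⟩
        · have : a - ε' < z := hz
          have : ε' ≤ 1 := min_le_right _ _
          linarith [hxI.1]
        · have : ε' ≤ ε := min_le_left _ _
          linarith [hxI.1]
    have hAinf : A.Infinite := accum_infinite' hacc
    have hinj : Set.InjOn Int.fract A := by
      intro x hx y hy hxy
      apply eq_of_fract_eq _ hxy
      have hx' := hx.1
      have hy' := hy.1
      rw [abs_lt]
      constructor <;> [skip; skip] <;>
        · simp only [Set.mem_Ioo] at hx' hy'; linarith [hx'.1, hx'.2, hy'.1, hy'.2]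
    have hsub : Int.fract '' A ⊆
        {t ∈ Ico (0:ℝ) 1 | IsLocalMax g t} ∪ {t ∈ Ico (0:ℝ) 1 | IsLocalMin g t} := by
      rintro _ ⟨x, ⟨hxI, hxE⟩, rfl⟩
      have hIco : Int.fract x ∈ Ico (0:ℝ) 1 := ⟨Int.fract_nonneg x, Int.fract_lt_one x⟩
      rcases hxE with h | h
      · exact Or.inl ⟨hIco, isLocalMax_fract hper h⟩
      · exact Or.inr ⟨hIco, isLocalMin_fract hper h⟩
    exact (hAinf.image hinj) ((hfinM.union hfinm).subset hsub)
  exact ⟨t'', h2, h5, h3, h4⟩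



lemma aboveAfter_iff {t' : ℝ} (hg : Continuous g) (hbt' : sSup S < t')
    (h4 : ∀ s ∈ Ioo (sSup S) t', g s ≠ c) :
    AboveAfter g c S ↔ ∀ s ∈ Ioo (sSup S) t', c < g s := by
  constructor
  · rintro ⟨ε, hε, h⟩
    rcases sign_dichotomy hg h4 with hpos | hneg
    · exact hpos
    · exfalso
      set w := (sSup S + min (sSup S + ε) t') / 2 with hwdef
      have hw1 : sSup S < w := by
        have : sSup S < min (sSup S + ε) t' := lt_min (by linarith) hbt'
        rw [hwdef]; linarith
      have hw2 : w < sSup S + ε := by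
        have h' : min (sSup S + ε) t' ≤ sSup S + ε := min_le_left _ _
        rw [hwdef]; linarith
      have hw3 : w < t' := by
        have h' : min (sSup S + ε) t' ≤ t' := min_le_right _ _
        rw [hwdef]; linarith
      exact absurd (h w ⟨hw1, hw2⟩) (not_lt.mpr (hneg w ⟨hw1, hw3⟩).le)
  · intro h
    exact ⟨t' - sSup S, by linarith, fun s hs => h s ⟨hs.1, by linarith [hs.2]⟩⟩

lemma below_after {t' : ℝ} (hg : Continuous g) (hbt' : sSup S < t')
    (h4 : ∀ s ∈ Ioo (sSup S) t', g s ≠ c) (hnA : ¬ AboveAfter g c S) :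
    ∀ s ∈ Ioo (sSup S) t', g s < c := by
  rcases sign_dichotomy hg h4 with hpos | hneg
  · exact absurd ((aboveAfter_iff hg hbt' h4).mpr hpos) hnA
  · exact hneg

lemma aboveBefore_iff {t'' : ℝ} (hg : Continuous g) (hbt'' : t'' < sInf S)
    (h4 : ∀ s ∈ Ioo t'' (sInf S), g s ≠ c) :
    AboveBefore g c S ↔ ∀ s ∈ Ioo t'' (sInf S), c < g s := by
  constructor
  · rintro ⟨ε, hε, h⟩
    rcases sign_dichotomy hg h4 with hpos | hneg
    · exact hpos
    · exfalso
      set w := (max (sInf S - ε) t'' + sInf S) / 2 with hwdef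
      have hw0 : max (sInf S - ε) t'' < sInf S := max_lt (by linarith) hbt''
      have hw1 : w < sInf S := by rw [hwdef]; linarith
      have hw2 : sInf S - ε < w := by
        have h' : sInf S - ε ≤ max (sInf S - ε) t'' := le_max_left _ _
        rw [hwdef]; linarith
      have hw3 : t'' < w := by
        have h' : t'' ≤ max (sInf S - ε) t'' := le_max_right _ _
        rw [hwdef]; linarith
      exact absurd (h w ⟨hw2, hw1⟩) (not_lt.mpr (hneg w ⟨hw3, hw1⟩).le)
  · intro h
    exact ⟨sInf S - t'', by linarith, fun s hs => h s ⟨by linarith [hs.1], hs.2⟩⟩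

lemma below_before {t'' : ℝ} (hg : Continuous g) (hbt'' : t'' < sInf S)
    (h4 : ∀ s ∈ Ioo t'' (sInf S), g s ≠ c) (hnB : ¬ AboveBefore g c S) :
    ∀ s ∈ Ioo t'' (sInf S), g s < c := by
  rcases sign_dichotomy hg h4 with hpos | hneg
  · exact absurd ((aboveBefore_iff hg hbt'' h4).mpr hpos) hnB
  · exact hneg

lemma gap_point (hg : Continuous g) (hper : Function.Periodic g 1)
    (hnu : {t : ℝ | g t = c} ≠ univ)
    (hfinM : {t ∈ Ico (0:ℝ) 1 | IsLocalMax g t}.Finite)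
    (hfinm : {t ∈ Ico (0:ℝ) 1 | IsLocalMin g t}.Finite)
    (hS : S ∈ circComps {t : ℝ | g t = c}) :
    ∃ x, sSup S < x ∧ x < sSup S + 1 ∧ (∀ s ∈ Ioo (sSup S) x, g s ≠ c) ∧
      (AboveAfter g c S → IsLocalMax g x ∧ c < g x) ∧
      (¬AboveAfter g c S → IsLocalMin g x ∧ g x < c) := by
  obtain ⟨t', hbt', ht'le, hgt', h4⟩ := next_gap hg hper hnu hfinM hfinm hS
  have hb : g (sSup S) = c := comp_sub hS (comp_sSup_mem hg hper hnu hS)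
  set w := (sSup S + t') / 2 with hwdef
  have hwI : w ∈ Ioo (sSup S) t' := ⟨by rw [hwdef]; linarith, by rw [hwdef]; linarith⟩
  by_cases hA : AboveAfter g c S
  · have hall := (aboveAfter_iff hg hbt' h4).mp hA
    obtain ⟨x, hxI, hxmax, hxgt⟩ := exists_max_between hg hbt' hb hgt' hwI (hall w hwI)
    refine ⟨x, hxI.1, by linarith [hxI.2], ?_, fun _ => ⟨hxmax, hxgt⟩,
      fun h => (absurd hA h : False).elim⟩
    exact fun s hs => h4 s ⟨hs.1, lt_trans hs.2 hxI.2⟩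
  · have hall := below_after hg hbt' h4 hA
    obtain ⟨x, hxI, hxmin, hxlt⟩ := exists_min_between hg hbt' hb hgt' hwI (hall w hwI)
    refine ⟨x, hxI.1, by linarith [hxI.2], ?_, fun h => (absurd h hA : False).elim,
      fun _ => ⟨hxmin, hxlt⟩⟩
    exact fun s hs => h4 s ⟨hs.1, lt_trans hs.2 hxI.2⟩

lemma glancing_min (hg : Continuous g) (hper : Function.Periodic g 1)
    (hnu : {t : ℝ | g t = c} ≠ univ)
    (hfinM : {t ∈ Ico (0:ℝ) 1 | IsLocalMax g t}.Finite)
    (hfinm : {t ∈ Ico (0:ℝ) 1 | IsLocalMin g t}.Finite)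
    (hS : S ∈ circComps {t : ℝ | g t = c})
    (hgl : IsGlancing g c S) (hA : AboveAfter g c S) : IsLocalMin g (sInf S) := by
  have hB : AboveBefore g c S := hgl.mpr hA
  obtain ⟨t', hbt', ht'le, hgt', h4⟩ := next_gap hg hper hnu hfinM hfinm hS
  obtain ⟨t'', ht''ge, ht''lt, hgt'', h4'⟩ := prev_gap hg hper hnu hfinM hfinm hS
  have hafter := (aboveAfter_iff hg hbt' h4).mp hA
  have hbefore := (aboveBefore_iff hg ht''lt h4').mp hB
  have hab : sInf S ≤ sSup S :=
    csInf_le_csSup (comp_ne hS) (comp_bddBelow hper hnu hS) (comp_bddAbove hper hnu hS)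
  have ha : g (sInf S) = c := comp_sub hS (comp_sInf_mem hg hper hnu hS)
  set ε := min (sInf S - t'') (t' - sInf S) with hεdef
  have hε : 0 < ε := lt_min (by linarith) (by linarith)
  have hnb : Ioo (sInf S - ε) (sInf S + ε) ∈ 𝓝 (sInf S) :=
    Ioo_mem_nhds (by linarith) (by linarith)
  filter_upwards [hnb] with s hs
  rw [ha]
  rcases lt_or_ge s (sInf S) with hlt | hge
  · have h1 : ε ≤ sInf S - t'' := min_le_left _ _
    exact (hbefore s ⟨by linarith [hs.1], hlt⟩).le
  · rcases le_or_gt s (sSup S) with hle | hgt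
    · have : s ∈ S := by
        rw [comp_eq_Icc hg hper hnu hS]; exact ⟨hge, hle⟩
      exact le_of_eq (comp_sub hS this).symm
    · have h2 : ε ≤ t' - sInf S := min_le_right _ _
      exact (hafter s ⟨hgt, by linarith [hs.2]⟩).le

lemma glancing_max (hg : Continuous g) (hper : Function.Periodic g 1)
    (hnu : {t : ℝ | g t = c} ≠ univ)
    (hfinM : {t ∈ Ico (0:ℝ) 1 | IsLocalMax g t}.Finite)
    (hfinm : {t ∈ Ico (0:ℝ) 1 | IsLocalMin g t}.Finite)
    (hS : S ∈ circComps {t : ℝ | g t = c})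
    (hgl : IsGlancing g c S) (hnA : ¬ AboveAfter g c S) : IsLocalMax g (sInf S) := by
  have hnB : ¬ AboveBefore g c S := fun hB => hnA (hgl.mp hB)
  obtain ⟨t', hbt', ht'le, hgt', h4⟩ := next_gap hg hper hnu hfinM hfinm hS
  obtain ⟨t'', ht''ge, ht''lt, hgt'', h4'⟩ := prev_gap hg hper hnu hfinM hfinm hS
  have hafter := below_after hg hbt' h4 hnA
  have hbefore := below_before hg ht''lt h4' hnB
  have hab : sInf S ≤ sSup S :=
    csInf_le_csSup (comp_ne hS) (comp_bddBelow hper hnu hS) (comp_bddAbove hper hnu hS)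
  have ha : g (sInf S) = c := comp_sub hS (comp_sInf_mem hg hper hnu hS)
  set ε := min (sInf S - t'') (t' - sInf S) with hεdef
  have hε : 0 < ε := lt_min (by linarith) (by linarith)
  have hnb : Ioo (sInf S - ε) (sInf S + ε) ∈ 𝓝 (sInf S) :=
    Ioo_mem_nhds (by linarith) (by linarith)
  filter_upwards [hnb] with s hs
  rw [ha]
  rcases lt_or_ge s (sInf S) with hlt | hge
  · have h1 : ε ≤ sInf S - t'' := min_le_left _ _
    exact (hbefore s ⟨by linarith [hs.1], hlt⟩).le
  · rcases le_or_gt s (sSup S) with hle | hgt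
    · have : s ∈ S := by
        rw [comp_eq_Icc hg hper hnu hS]; exact ⟨hge, hle⟩
      exact le_of_eq (comp_sub hS this)
    · have h2 : ε ≤ t' - sInf S := min_le_right _ _
      exact (hafter s ⟨hgt, by linarith [hs.2]⟩).le



lemma sInf_image_add {A : Set ℝ} (hne : A.Nonempty) (hbdd : BddBelow A) (r : ℝ) :
    sInf ((fun y => y + r) '' A) = sInf A + r := by
  have hglb : IsGLB A (sInf A) := isGLB_csInf hne hbdd
  have : IsGLB ((fun y => y + r) '' A) (sInf A + r) := by
    constructor
    · rintro _ ⟨y, hy, rfl⟩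
      exact add_le_add_left (hglb.1 hy) r
    · intro l hl
      have : l - r ∈ lowerBounds A := fun y hy => by
        have h2 : l ≤ y + r := hl ⟨y, hy, rfl⟩; linarith
      linarith [hglb.2 this]
  exact this.csInf_eq (hne.image _)

lemma comp_eq_of_fract_eq (hg : Continuous g) (hper : Function.Periodic g 1)
    (hnu : {t : ℝ | g t = c} ≠ univ) {S₁ S₂ : Set ℝ}
    (hS₁ : S₁ ∈ circComps {t : ℝ | g t = c}) (hS₂ : S₂ ∈ circComps {t : ℝ | g t = c})
    {x₁ x₂ : ℝ} (hx₁ : sSup S₁ < x₁) (hx₁' : ∀ s ∈ Ioo (sSup S₁) x₁, g s ≠ c)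
    (hx₂ : sSup S₂ < x₂) (hx₂' : ∀ s ∈ Ioo (sSup S₂) x₂, g s ≠ c)
    (hfr : Int.fract x₁ = Int.fract x₂) : S₁ = S₂ := by
  set k : ℤ := ⌊x₂⌋ - ⌊x₁⌋ with hkdef
  have hx : x₂ = x₁ + k := by
    rw [Int.fract, Int.fract] at hfr
    rw [hkdef]
    push_cast
    linarith
  have hb₁ : g (sSup S₁) = c := comp_sub hS₁ (comp_sSup_mem hg hper hnu hS₁)
  have hb₂ : g (sSup S₂) = c := comp_sub hS₂ (comp_sSup_mem hg hper hnu hS₂)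
  have hG₂ : IsGreatest ({t : ℝ | g t = c} ∩ Iio x₂) (sSup S₂) := by
    refine ⟨⟨hb₂, hx₂⟩, ?_⟩
    intro z hz
    by_contra hzgt
    push_neg at hzgt
    exact hx₂' z ⟨hzgt, hz.2⟩ hz.1
  have hG₁' : IsGreatest ({t : ℝ | g t = c} ∩ Iio x₂) (sSup S₁ + k) := by
    constructor
    · exact ⟨lev_add_int hper k hb₁, by rw [hx]; exact add_lt_add_left hx₁ _⟩
    · intro z hz
      have hz' : z + ((-k : ℤ) : ℝ) ∈ {t : ℝ | g t = c} := lev_add_int hper (-k) hz.1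
      have hzlt : z + ((-k : ℤ) : ℝ) < x₁ := by
        have h3 := hz.2
        rw [hx, mem_Iio] at h3
        push_cast
        linarith
      have hle : z + ((-k : ℤ) : ℝ) ≤ sSup S₁ := by
        by_contra hgt
        push_neg at hgt
        exact hx₁' _ ⟨hgt, hzlt⟩ hz'
      push_cast at hle
      linarith
  have hbb : sSup S₂ = sSup S₁ + k := hG₂.unique hG₁'
  have hSS₂ : S₂ = connectedComponentIn {t : ℝ | g t = c} (sSup S₁ + k) := by
    rw [← hbb]
    exact comp_eq_compIn hS₂ (comp_sSup_mem hg hper hnu hS₂)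
  have hSS₁ : S₁ = connectedComponentIn {t : ℝ | g t = c} (sSup S₁) :=
    comp_eq_compIn hS₁ (comp_sSup_mem hg hper hnu hS₁)
  have himg : S₂ = (fun y => y + (k : ℝ)) '' S₁ := by
    rw [hSS₂, compIn_add_int hper k (sSup S₁), ← hSS₁]
  have hinf₂ : sInf S₂ = sInf S₁ + k := by
    rw [himg, sInf_image_add (comp_ne hS₁) (comp_bddBelow hper hnu hS₁)]
  obtain ⟨-, -, -, hi₁⟩ := id hS₁
  obtain ⟨-, -, -, hi₂⟩ := id hS₂
  have hk0 : k = 0 := by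
    have h1 : (0:ℝ) ≤ sInf S₁ := hi₁.1
    have h2 : sInf S₁ < 1 := hi₁.2
    have h3 : (0:ℝ) ≤ sInf S₂ := hi₂.1
    have h4 : sInf S₂ < 1 := hi₂.2
    have : |(k : ℝ)| < 1 := by rw [abs_lt]; constructor <;> linarith [hinf₂]
    rw [← Int.cast_abs] at this
    have h5 : |k| < (1:ℤ) := by exact_mod_cast this
    rw [abs_lt] at h5
    omega
  rw [himg, hk0]
  simp



lemma key (hg : Continuous g) (hper : Function.Periodic g 1)
    (hnu : {t : ℝ | g t = c} ≠ univ)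
    (hfinM : {t ∈ Ico (0:ℝ) 1 | IsLocalMax g t}.Finite)
    (hfinm : {t ∈ Ico (0:ℝ) 1 | IsLocalMin g t}.Finite) :
    Cardinal.mk (circComps {t : ℝ | g t = c}) +
      Cardinal.mk {S ∈ circComps {t : ℝ | g t = c} | IsGlancing g c S} ≤
    Cardinal.mk {t ∈ Ico (0:ℝ) 1 | IsLocalMax g t} +
      Cardinal.mk {t ∈ Ico (0:ℝ) 1 | IsLocalMin g t} := by
  classical
  set Z := {t : ℝ | g t = c} with hZdef
  set M := {t ∈ Ico (0:ℝ) 1 | IsLocalMax g t} with hMdef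
  set m' := {t ∈ Ico (0:ℝ) 1 | IsLocalMin g t} with hmdef
  have hchoice : ∀ S : circComps Z, ∃ x : ℝ,
      sSup S.1 < x ∧ x < sSup S.1 + 1 ∧ (∀ s ∈ Ioo (sSup S.1) x, g s ≠ c) ∧
      (AboveAfter g c S.1 → IsLocalMax g x ∧ c < g x) ∧
      (¬AboveAfter g c S.1 → IsLocalMin g x ∧ g x < c) :=
    fun S => gap_point hg hper hnu hfinM hfinm S.2
  set xf : circComps Z → ℝ := fun S => (hchoice S).choose with hxfdef
  have hxf : ∀ S : circComps Z,
      sSup S.1 < xf S ∧ xf S < sSup S.1 + 1 ∧ (∀ s ∈ Ioo (sSup S.1) (xf S), g s ≠ c) ∧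
      (AboveAfter g c S.1 → IsLocalMax g (xf S) ∧ c < g (xf S)) ∧
      (¬AboveAfter g c S.1 → IsLocalMin g (xf S) ∧ g (xf S) < c) :=
    fun S => (hchoice S).choose_spec
  have hmemM : ∀ (S : circComps Z), AboveAfter g c S.1 → Int.fract (xf S) ∈ M :=
    fun S h => ⟨⟨Int.fract_nonneg _, Int.fract_lt_one _⟩,
      isLocalMax_fract hper ((hxf S).2.2.2.1 h).1⟩
  have hmemm : ∀ (S : circComps Z), ¬AboveAfter g c S.1 → Int.fract (xf S) ∈ m' :=
    fun S h => ⟨⟨Int.fract_nonneg _, Int.fract_lt_one _⟩,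
      isLocalMin_fract hper ((hxf S).2.2.2.2 h).1⟩
  have hIco : ∀ (S : Set ℝ), S ∈ circComps Z → sInf S ∈ Ico (0:ℝ) 1 := by
    rintro S ⟨t, ht, heq, hi⟩; exact hi
  have hmemm' : ∀ (T : {S ∈ circComps Z | IsGlancing g c S}), AboveAfter g c T.1 →
      sInf T.1 ∈ m' :=
    fun T h => ⟨hIco T.1 T.2.1, glancing_min hg hper hnu hfinM hfinm T.2.1 T.2.2 h⟩
  have hmemM' : ∀ (T : {S ∈ circComps Z | IsGlancing g c S}), ¬AboveAfter g c T.1 →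
      sInf T.1 ∈ M :=
    fun T h => ⟨hIco T.1 T.2.1, glancing_max hg hper hnu hfinM hfinm T.2.1 T.2.2 h⟩
  set F : (circComps Z ⊕ {S ∈ circComps Z | IsGlancing g c S}) → (M ⊕ m') := fun u =>
    Sum.rec
      (fun S => if h : AboveAfter g c S.1 then Sum.inl ⟨Int.fract (xf S), hmemM S h⟩
        else Sum.inr ⟨Int.fract (xf S), hmemm S h⟩)
      (fun T => if h : AboveAfter g c T.1 then Sum.inr ⟨sInf T.1, hmemm' T h⟩
        else Sum.inl ⟨sInf T.1, hmemM' T h⟩) u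
    with hFdef
  -- auxiliary facts for injectivity
  have hgfr : ∀ (S : circComps Z), g (Int.fract (xf S)) ≠ c := by
    intro S
    rw [g_fract hper]
    by_cases h : AboveAfter g c S.1
    · exact ne_of_gt ((hxf S).2.2.2.1 h).2
    · exact ne_of_lt ((hxf S).2.2.2.2 h).2
  have hgsInf : ∀ (T : {S ∈ circComps Z | IsGlancing g c S}), g (sInf T.1) = c :=
    fun T => comp_sub T.2.1 (comp_sInf_mem hg hper hnu T.2.1)
  have hcompeq : ∀ (S S' : circComps Z),
      Int.fract (xf S) = Int.fract (xf S') → S = S' := by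
    intro S S' hfr
    have := comp_eq_of_fract_eq hg hper hnu S.2 S'.2 (hxf S).1 (hxf S).2.2.1
      (hxf S').1 (hxf S').2.2.1 hfr
    exact Subtype.ext this
  have hglcompeq : ∀ (T T' : {S ∈ circComps Z | IsGlancing g c S}),
      sInf T.1 = sInf T'.1 → T = T' := by
    intro T T' hinf
    apply Subtype.ext
    have h1 : T.1 = connectedComponentIn Z (sInf T.1) :=
      comp_eq_compIn T.2.1 (comp_sInf_mem hg hper hnu T.2.1)
    have h2 : T'.1 = connectedComponentIn Z (sInf T'.1) :=
      comp_eq_compIn T'.2.1 (comp_sInf_mem hg hper hnu T'.2.1)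
    rw [h1, h2, hinf]
  have hinj : Function.Injective F := by
    rintro (S | T) (S' | T') huv
    · by_cases h1 : AboveAfter g c S.1 <;> by_cases h2 : AboveAfter g c S'.1 <;>
        simp only [hFdef, dif_pos, dif_neg, h1, h2, dite_true, dite_false,
          reduceDIte] at huv <;>
        first
        | (rw [Sum.inl.injEq, Subtype.mk.injEq] at huv
           exact congrArg Sum.inl (hcompeq S S' huv))
        | (rw [Sum.inr.injEq, Subtype.mk.injEq] at huv
           exact congrArg Sum.inl (hcompeq S S' huv))
        | cases huv
    · exfalso
      by_cases h1 : AboveAfter g c S.1 <;> by_cases h2 : AboveAfter g c T'.1 <;>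
        simp only [hFdef, h1, h2, dite_true, dite_false, reduceDIte] at huv <;>
        first
        | cases huv
        | (rw [Sum.inl.injEq, Subtype.mk.injEq] at huv
           exact hgfr S (by rw [huv]; exact hgsInf T'))
        | (rw [Sum.inr.injEq, Subtype.mk.injEq] at huv
           exact hgfr S (by rw [huv]; exact hgsInf T'))
    · exfalso
      by_cases h1 : AboveAfter g c T.1 <;> by_cases h2 : AboveAfter g c S'.1 <;>
        simp only [hFdef, h1, h2, dite_true, dite_false, reduceDIte] at huv <;>
        first
        | cases huv
        | (rw [Sum.inl.injEq, Subtype.mk.injEq] at huv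
           exact hgfr S' (by rw [← huv]; exact hgsInf T))
        | (rw [Sum.inr.injEq, Subtype.mk.injEq] at huv
           exact hgfr S' (by rw [← huv]; exact hgsInf T))
    · by_cases h1 : AboveAfter g c T.1 <;> by_cases h2 : AboveAfter g c T'.1 <;>
        simp only [hFdef, h1, h2, dite_true, dite_false, reduceDIte] at huv <;>
        first
        | (rw [Sum.inl.injEq, Subtype.mk.injEq] at huv
           exact congrArg Sum.inr (hglcompeq T T' huv))
        | (rw [Sum.inr.injEq, Subtype.mk.injEq] at huv
           exact congrArg Sum.inr (hglcompeq T T' huv))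
        | cases huv
  have hle := Cardinal.mk_le_of_injective hinj
  rwa [Cardinal.mk_sum, Cardinal.mk_sum, Cardinal.lift_id, Cardinal.lift_id,
    Cardinal.lift_id, Cardinal.lift_id] at hle


lemma mk_of_encard {α : Type} {s : Set α} {n : ℕ} (h : s.encard = n) :
    Cardinal.mk s = n := by
  rw [Set.encard, ENat.card] at h
  exact_mod_cast Cardinal.toENat_eq_nat.mp h

end BP

/-- If a closed curve `K` in `ℝ³` admits a nonzero linear height
function with exactly `n` local minima and `n` local maxima on the domain circle
(i.e. on one period), then the `(n+1)`-st hull of `K` is empty. -/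
theorem hull_succ_empty_of_bridge (n : ℕ)
    (K : ℝ → EuclideanSpace ℝ (Fin 3))
    (hK : Continuous K) (hper : Function.Periodic K 1)
    (ℓ : EuclideanSpace ℝ (Fin 3) →L[ℝ] ℝ) (hℓ : ℓ ≠ 0)
    (hmin : {t ∈ Ico (0 : ℝ) 1 | IsLocalMin (fun s => ℓ (K s)) t}.encard = n)
    (hmax : {t ∈ Ico (0 : ℝ) 1 | IsLocalMax (fun s => ℓ (K s)) t}.encard = n) :
    hull K (n + 1) = ∅ := by
  ext p
  simp only [mem_empty_iff_false, iff_false]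
  intro hp
  have hcut := hp ℓ hℓ
  set g : ℝ → ℝ := fun s => ℓ (K s) with hgdef
  have hgc : Continuous g := ℓ.continuous.comp hK
  have hgper : Function.Periodic g 1 := fun t => by simp only [hgdef, hper t]
  set c : ℝ := ℓ p with hcdef
  have hfinmin : {t ∈ Ico (0:ℝ) 1 | IsLocalMin g t}.Finite :=
    Set.finite_of_encard_eq_coe hmin
  have hfinmax : {t ∈ Ico (0:ℝ) 1 | IsLocalMax g t}.Finite :=
    Set.finite_of_encard_eq_coe hmax
  unfold CutsAtLeast cutCount at hcut
  replace hcut : ((2 * (n + 1) : ℕ) : Cardinal) ≤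
      (if {t : ℝ | g t = c} = univ then 2
       else Cardinal.mk (circComps {t : ℝ | g t = c})
         + Cardinal.mk {S ∈ circComps {t : ℝ | g t = c} | IsGlancing g c S}) := hcut
  by_cases hU : {t : ℝ | g t = c} = univ
  · have h1 : ∀ s, g s = c := fun s => eq_univ_iff_forall.mp hU s
    have hall : ∀ t, IsLocalMin g t := by
      intro t
      unfold IsLocalMin IsMinFilter
      filter_upwards with s
      rw [h1 s, h1 t]
    have heq : {t ∈ Ico (0:ℝ) 1 | IsLocalMin g t} = Ico (0:ℝ) 1 := by
      ext t; simp [hall t]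
    rw [heq] at hmin
    have hinf : (Ico (0:ℝ) 1).Infinite := Set.Ico_infinite (by norm_num)
    rw [hinf.encard_eq] at hmin
    exact absurd hmin.symm (by simp)
  · rw [if_neg hU] at hcut
    by_cases hZe : {t : ℝ | g t = c} = ∅
    · have hcc : circComps {t : ℝ | g t = c} = ∅ := by
        ext S
        simp only [circComps, mem_setOf_eq, mem_empty_iff_false, iff_false]
        rintro ⟨t, ht, -⟩
        have ht' : t ∈ ({t : ℝ | g t = c} : Set ℝ) := ht
        rw [hZe] at ht'
        exact ht'
      rw [hcc] at hcut
      simp only [sep_empty, Cardinal.mk_emptyCollection, add_zero, zero_add] at hcut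
      have : (2 * (n + 1) : ℕ) ≤ 0 := by exact_mod_cast hcut
      omega
    · have hk := BP.key (g := g) (c := c) hgc hgper hU hfinmax hfinmin
      have hM : Cardinal.mk {t ∈ Ico (0:ℝ) 1 | IsLocalMax g t} = (n : Cardinal) :=
        BP.mk_of_encard hmax
      have hm : Cardinal.mk {t ∈ Ico (0:ℝ) 1 | IsLocalMin g t} = (n : Cardinal) :=
        BP.mk_of_encard hmin
      rw [hM, hm] at hk
      have hfin : ((2 * (n + 1) : ℕ) : Cardinal) ≤ ((2 * n : ℕ) : Cardinal) := by
        refine le_trans hcut (le_trans hk ?_)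
        push_cast
        rw [two_mul]
      have := Nat.cast_le.mp hfin
      omega
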